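/- Let Φ : ℝⁿ → ℝᴺ be linear with m ∈ ℤᴺ a vector such that the linear functional x ↦ ⟨m, Φ(x)⟩ on ℝⁿ is nonzero. Then for any ball B = B(a, R) ⊆ ℝⁿ, |∫_B exp(2πi ⟨m, Φ(x)⟩) dx| ≤ C(m, Φ) · Rⁿ⁻¹ for a constant C(m,Φ) independent of a and R (for R ≥ 1); consequently (1/Vol(B(0,λ))) ∫_{B(0,λ)} exp(2πi ⟨m, Φ(x)⟩) dx → 0 as λ → ∞. -/

import Mathlib

open MeasureTheory Filter

set_option maxHeartbeats 1600000

/-- Auxiliary: `a^n - b^n ≤ n * a^(n-1) * (a - b)` for `0 ≤ b ≤ a`. -/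
lemma osc_aux_pow_sub_pow_le {a b : ℝ} (hb : 0 ≤ b) (hab : b ≤ a) :
    ∀ n : ℕ, a ^ n - b ^ n ≤ n * a ^ (n - 1) * (a - b) := by
  intro n
  induction n with
  | zero => simp
  | succ k ih =>
    have ha : 0 ≤ a := hb.trans hab
    have hbk : b ^ k ≤ a ^ k := pow_le_pow_left₀ hb hab k
    have hak : 0 ≤ a ^ k := pow_nonneg ha k
    cases k with
    | zero => simp
    | succ j =>
      have h1 : a ^ (j + 1) - b ^ (j + 1) ≤ (j + 1) * a ^ j * (a - b) := by
        simpa using ih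
      have haj : 0 ≤ a ^ j := pow_nonneg ha j
      have e2 : (0:ℝ) ≤ a - b := by linarith
      have e3 : a * (a ^ (j + 1) - b ^ (j + 1)) ≤ a * ((j + 1) * a ^ j * (a - b)) :=
        mul_le_mul_of_nonneg_left h1 ha
      have e4 : (a - b) * b ^ (j + 1) ≤ (a - b) * a ^ (j + 1) :=
        mul_le_mul_of_nonneg_left (pow_le_pow_left₀ hb hab (j + 1)) e2
      have e1 : a ^ (j + 2) - b ^ (j + 2)
          = a * (a ^ (j + 1) - b ^ (j + 1)) + (a - b) * b ^ (j + 1) := by ring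
      have e5 : a * ((↑j + 1 : ℝ) * a ^ j * (a - b)) = (↑j + 1) * a ^ (j + 1) * (a - b) := by
        ring
      show a ^ (j + 2) - b ^ (j + 2) ≤ (↑(j + 2) : ℝ) * a ^ (j + 1) * (a - b)
      push_cast
      nlinarith [e1, e3, e4, e5]

/-- Oscillatory integral estimate: if ⟨m, Φ(·)⟩ is a nonzero linear functional, then the integral
of exp(2πi⟨m, Φ(x)⟩) over any ball B(a,R), R ≥ 1, is O(Rⁿ⁻¹) uniformly in a; consequently the
ball averages tend to 0. -/
theorem oscillatory_integral_ball_estimate (n N : ℕ)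
    (Φ : (Fin n → ℝ) →ₗ[ℝ] (Fin N → ℝ)) (m : Fin N → ℤ)
    (hm : ∃ x : Fin n → ℝ, ∑ i, (m i : ℝ) * Φ x i ≠ 0) :
    (∃ C : ℝ, ∀ (a : Fin n → ℝ) (R : ℝ), 1 ≤ R →
        ‖∫ x in Metric.ball a R,
            Complex.exp (2 * Real.pi * Complex.I * ((∑ i, (m i : ℝ) * Φ x i : ℝ) : ℂ))‖ ≤
          C * R ^ ((n : ℝ) - 1)) ∧
      Tendsto (fun lam : ℝ =>
          ((volume (Metric.ball (0 : Fin n → ℝ) lam)).toReal)⁻¹ •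
            ∫ x in Metric.ball (0 : Fin n → ℝ) lam,
              Complex.exp (2 * Real.pi * Complex.I * ((∑ i, (m i : ℝ) * Φ x i : ℝ) : ℂ)))
        atTop (nhds 0) := by
  classical
  -- the linear functional L x = ∑ mᵢ Φ(x)ᵢ
  set L : (Fin n → ℝ) →ₗ[ℝ] ℝ :=
    { toFun := fun x => ∑ i, (m i : ℝ) * Φ x i
      map_add' := by
        intro x y
        simp [map_add, mul_add, Finset.sum_add_distrib]
      map_smul' := by
        intro c x
        simp only [LinearMap.map_smul, Pi.smul_apply, smul_eq_mul, Finset.mul_sum, RingHom.id_apply]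
        exact Finset.sum_congr rfl fun i _ => by ring } with hL
  have hLx : ∀ x, (∑ i, (m i : ℝ) * Φ x i) = L x := fun x => rfl
  obtain ⟨x₀, hx₀⟩ := hm
  rw [hLx] at hx₀
  -- n ≥ 1
  have hn : 1 ≤ n := by
    by_contra h
    have hn0 : n = 0 := by omega
    subst hn0
    exact hx₀ (by rw [Subsingleton.elim x₀ 0, map_zero])
  obtain ⟨k, hk⟩ : ∃ k, n = k + 1 := ⟨n - 1, (Nat.succ_pred_eq_of_pos hn).symm⟩
  subst hk
  -- the shift vector with L v = 1/2
  set v : Fin (k + 1) → ℝ := (2 * L x₀)⁻¹ • x₀ with hv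
  have hLv : L v = 1 / 2 := by
    rw [hv, LinearMap.map_smul, smul_eq_mul]
    field_simp
  set d : ℝ := ‖v‖ with hd
  have hd0 : 0 ≤ d := norm_nonneg v
  -- the integrand
  set f : (Fin (k + 1) → ℝ) → ℂ :=
    fun x => Complex.exp (2 * Real.pi * Complex.I * ((L x : ℝ) : ℂ)) with hf
  have hcont : Continuous f := by
    apply Complex.continuous_exp.comp
    exact continuous_const.mul (Complex.continuous_ofReal.comp L.continuous_of_finiteDimensional)
  have hnorm : ∀ x, ‖f x‖ = 1 := by
    intro x
    have harg : (2 * (Real.pi : ℂ) * Complex.I * ((L x : ℝ) : ℂ))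
        = ((2 * Real.pi * L x : ℝ) : ℂ) * Complex.I := by push_cast; ring
    simp only [hf, harg, Complex.norm_exp_ofReal_mul_I]
  have hfe : ∀ x, Complex.exp (2 * Real.pi * Complex.I * ((L x : ℝ) : ℂ)) = f x := fun _ => rfl
  simp only [hLx, hfe]
  -- integrability on balls
  have hint : ∀ (a : Fin (k + 1) → ℝ) (R : ℝ), IntegrableOn f (Metric.ball a R) volume := by
    intro a R
    refine Measure.integrableOn_of_bounded (M := 1) measure_ball_lt_top.ne
      hcont.aestronglyMeasurable ?_
    filter_upwards with x using le_of_eq (hnorm x)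
  -- f (x + v) = - f x
  have hfv : ∀ x, f (x + v) = - f x := by
    intro x
    have hLxv : L (x + v) = L x + 1 / 2 := by rw [map_add, hLv]
    have harg : (2 * (Real.pi : ℂ) * Complex.I * ((L (x + v) : ℝ) : ℂ))
        = 2 * Real.pi * Complex.I * ((L x : ℝ) : ℂ) + Real.pi * Complex.I := by
      rw [hLxv]; push_cast; ring
    simp only [hf, harg, Complex.exp_add, Complex.exp_pi_mul_I, mul_neg_one]
  -- translation identity
  have htrans : ∀ (a : Fin (k + 1) → ℝ) (R : ℝ),
      (∫ x in Metric.ball a R, f x) = - ∫ x in Metric.ball (a - v) R, f x := by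
    intro a R
    have hpre : (fun x : Fin (k + 1) → ℝ => x + v) ⁻¹' Metric.ball a R
        = Metric.ball (a - v) R := by
      ext x
      simp only [Set.mem_preimage, Metric.mem_ball, dist_eq_norm]
      rw [show x + v - a = x - (a - v) by abel]
    have hmp := (measurePreserving_add_right volume v).setIntegral_preimage_emb
      (MeasurableEquiv.addRight v).measurableEmbedding f (Metric.ball a R)
    rw [hpre] at hmp
    rw [← hmp]
    simp only [hfv, integral_neg]
  -- the constant
  set C : ℝ := (k + 1) * (2 * (1 + d)) ^ k * (4 * d) with hC
  have hC0 : 0 ≤ C := by positivity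
  -- key estimate
  have key : ∀ (a : Fin (k + 1) → ℝ) (R : ℝ), 1 ≤ R →
      ‖∫ x in Metric.ball a R, f x‖ ≤ C * R ^ k := by
    intro a R hR
    have hR0 : (0 : ℝ) < R := lt_of_lt_of_le one_pos hR
    set B1 := Metric.ball a R with hB1
    set B2 := Metric.ball (a - v) R with hB2
    set D1 := Metric.ball a (R + d) with hD1
    set D2 := Metric.ball a (R - d) with hD2
    have hdav : dist a (a - v) = d := by simp [dist_eq_norm, hd]
    have hsub1 : B1 \ B2 ⊆ D1 \ D2 := by
      rintro x ⟨hx1, hx2⟩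
      constructor
      · exact Metric.mem_ball.mpr (lt_of_lt_of_le (Metric.mem_ball.mp hx1) (by linarith))
      · intro hx
        apply hx2
        have h1 : dist x a < R - d := Metric.mem_ball.mp hx
        have h2 : dist x (a - v) ≤ dist x a + dist a (a - v) := dist_triangle _ _ _
        exact Metric.mem_ball.mpr (by rw [hdav] at h2; linarith)
    have hsub2 : B2 \ B1 ⊆ D1 \ D2 := by
      rintro x ⟨hx1, hx2⟩
      constructor
      · have h1 : dist x (a - v) < R := Metric.mem_ball.mp hx1
        have h2 : dist x a ≤ dist x (a - v) + dist (a - v) a := dist_triangle _ _ _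
        rw [dist_comm (a - v) a, hdav] at h2
        exact Metric.mem_ball.mpr (by linarith)
      · intro hx
        exact hx2 (Metric.mem_ball.mpr (lt_of_lt_of_le (Metric.mem_ball.mp hx) (by linarith)))
    have hD2subD1 : D2 ⊆ D1 := Metric.ball_subset_ball (by linarith)
    -- volume of the annulus
    have hvolD1 : (volume D1).toReal = (2 * (R + d)) ^ (k + 1) := by
      rw [hD1, Real.volume_pi_ball a (by linarith : (0:ℝ) < R + d),
        ENNReal.toReal_ofReal (by positivity), Fintype.card_fin]
    have hvolD2 : (volume D2).toReal = (2 * max (R - d) 0) ^ (k + 1) := by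
      rcases lt_or_ge 0 (R - d) with h | h
      · rw [hD2, Real.volume_pi_ball a h, ENNReal.toReal_ofReal (by positivity),
          Fintype.card_fin, max_eq_left h.le]
      · rw [hD2, Metric.ball_eq_empty.mpr h, max_eq_right h]
        simp
    have hannulus : (volume (D1 \ D2)).toReal
        = (2 * (R + d)) ^ (k + 1) - (2 * max (R - d) 0) ^ (k + 1) := by
      rw [measure_diff hD2subD1 measurableSet_ball.nullMeasurableSet measure_ball_lt_top.ne,
        ENNReal.toReal_sub_of_le (measure_mono hD2subD1) measure_ball_lt_top.ne,
        hvolD1, hvolD2]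
    set s : ℝ := max (R - d) 0 with hs
    have hs0 : 0 ≤ s := le_max_right _ _
    have hsle : s ≤ R + d := max_le (by linarith) (by linarith)
    have hsge : R - d ≤ s := le_max_left _ _
    have hpowle := osc_aux_pow_sub_pow_le (a := 2 * (R + d)) (b := 2 * s)
      (by positivity) (by linarith) (k + 1)
    have hsimp : (k + 1 : ℕ) - 1 = k := rfl
    rw [hsimp] at hpowle
    have hdR : d ≤ d * R := le_mul_of_one_le_right hd0 hR
    have hbase : 2 * (R + d) ≤ 2 * (1 + d) * R := by ring_nf; ring_nf at hdR; linarith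
    have hpow2 : (2 * (R + d)) ^ k ≤ (2 * (1 + d)) ^ k * R ^ k := by
      calc (2 * (R + d)) ^ k ≤ (2 * (1 + d) * R) ^ k :=
            pow_le_pow_left₀ (by positivity) hbase k
        _ = (2 * (1 + d)) ^ k * R ^ k := mul_pow _ _ _
    have hDvol : (volume (D1 \ D2)).toReal ≤ C * R ^ k := by
      rw [hannulus]
      have h4d : 2 * (R + d) - 2 * s ≤ 4 * d := by linarith
      have hA0 : (0:ℝ) ≤ ((k : ℝ) + 1) * (2 * (R + d)) ^ k := by positivity
      calc (2 * (R + d)) ^ (k + 1) - (2 * s) ^ (k + 1)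
          ≤ (↑(k + 1) : ℝ) * (2 * (R + d)) ^ k * (2 * (R + d) - 2 * s) := hpowle
        _ ≤ (↑(k + 1) : ℝ) * (2 * (R + d)) ^ k * (4 * d) := by
            apply mul_le_mul_of_nonneg_left h4d
            push_cast; positivity
        _ ≤ (↑(k + 1) : ℝ) * ((2 * (1 + d)) ^ k * R ^ k) * (4 * d) := by
            apply mul_le_mul_of_nonneg_right _ (by positivity)
            apply mul_le_mul_of_nonneg_left hpow2 (by positivity)
        _ = C * R ^ k := by rw [hC]; push_cast; ring
    -- difference of the two integrals
    have i1 := integral_inter_add_diff (μ := volume) (f := f)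
      (measurableSet_ball : MeasurableSet B2) (hint a R)
    have i2 := integral_inter_add_diff (μ := volume) (f := f)
      (measurableSet_ball : MeasurableSet B1) (hint (a - v) R)
    rw [Set.inter_comm] at i2
    rw [← hB1, ← hB2] at i1 i2
    have hIdiff : (∫ x in B1, f x) - (∫ x in B2, f x)
        = (∫ x in B1 \ B2, f x) - (∫ x in B2 \ B1, f x) := by
      linear_combination i2 - i1
    -- bound each piece
    have hpiece : ∀ S : Set (Fin (k + 1) → ℝ), S ⊆ D1 \ D2 →
        ‖∫ x in S, f x‖ ≤ (volume (D1 \ D2)).toReal := by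
      intro S hS
      have hSfin : volume S < ⊤ :=
        lt_of_le_of_lt (measure_mono (hS.trans Set.diff_subset)) measure_ball_lt_top
      calc ‖∫ x in S, f x‖ ≤ 1 * (volume S).toReal :=
            norm_setIntegral_le_of_norm_le_const hSfin (fun x _ => le_of_eq (hnorm x))
        _ = (volume S).toReal := one_mul _
        _ ≤ (volume (D1 \ D2)).toReal := by
            apply ENNReal.toReal_mono
              (lt_of_le_of_lt (measure_mono Set.diff_subset) measure_ball_lt_top).ne
            exact measure_mono hS
    have hI2 : (∫ x in B2, f x) = - ∫ x in B1, f x := by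
      rw [hB1, hB2]
      linear_combination htrans a R
    have h2norm : 2 * ‖∫ x in B1, f x‖
        = ‖(∫ x in B1, f x) - (∫ x in B2, f x)‖ := by
      rw [hI2, sub_neg_eq_add, ← two_smul ℂ (∫ x in B1, f x), norm_smul]
      norm_num
    have hfinal : ‖(∫ x in B1 \ B2, f x) - (∫ x in B2 \ B1, f x)‖
        ≤ 2 * (volume (D1 \ D2)).toReal := by
      calc ‖(∫ x in B1 \ B2, f x) - (∫ x in B2 \ B1, f x)‖
          ≤ ‖∫ x in B1 \ B2, f x‖ + ‖∫ x in B2 \ B1, f x‖ := norm_sub_le _ _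
        _ ≤ 2 * (volume (D1 \ D2)).toReal := by
            have := hpiece _ hsub1
            have := hpiece _ hsub2
            linarith
    rw [hIdiff] at h2norm
    linarith
  constructor
  · refine ⟨C, fun a R hR => ?_⟩
    have : ((k + 1 : ℕ) : ℝ) - 1 = ((k : ℕ) : ℝ) := by push_cast; ring
    rw [this, Real.rpow_natCast]
    exact key a R hR
  · rw [show (0 : ℂ) = 0 from rfl]
    apply tendsto_zero_iff_norm_tendsto_zero.mpr
    apply squeeze_zero' (g := fun lam : ℝ => C / 2 ^ (k + 1) * lam⁻¹)
    · filter_upwards with lam using norm_nonneg _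
    · filter_upwards [eventually_ge_atTop (1 : ℝ)] with lam hlam
      have hlam0 : (0 : ℝ) < lam := lt_of_lt_of_le one_pos hlam
      have hvol : (volume (Metric.ball (0 : Fin (k + 1) → ℝ) lam)).toReal
          = (2 * lam) ^ (k + 1) := by
        rw [Real.volume_pi_ball _ hlam0, ENNReal.toReal_ofReal (by positivity),
          Fintype.card_fin]
      rw [norm_smul, hvol, Real.norm_eq_abs, abs_of_nonneg (by positivity)]
      calc ((2 * lam) ^ (k + 1))⁻¹ * ‖∫ x in Metric.ball (0 : Fin (k + 1) → ℝ) lam, f x‖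
          ≤ ((2 * lam) ^ (k + 1))⁻¹ * (C * lam ^ k) := by
            apply mul_le_mul_of_nonneg_left (key 0 lam hlam) (by positivity)
        _ = C / 2 ^ (k + 1) * lam⁻¹ := by
            rw [mul_pow]
            field_simp
            ring
    · simpa using tendsto_inv_atTop_zero.const_mul (C / 2 ^ (k + 1))
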